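/- arXiv:1502.05963 — 2 statements merged into one kernel-verified Lean document; each statement's English description precedes it below -/
import Mathlib

section
/- For any regular bounded domain Ω ⊆ ℝ³ with C¹ boundary, and any C² solution u of -Δu = u - u³ on a neighborhood of the closure of Ω, the balancing formula ∫_{∂Ω} [(½|∇u|² + F(u))·X - (∇u·X)∇u] · ν dS = 0 holds, where ν is the outward unit normal, X = (0,0,1), F(u) = ¼(u²-1)². -/
open Real MeasureTheory

/-- Balancing formula: for a bounded open domain `Ω ⊆ ℝ³` with (C¹) boundary —
encoded by a surface measure `μ` on `∂Ω` and an outward unit normal `ν` for which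
the divergence theorem holds — and a `C²` solution `u` of `-Δu = u - u³` on a
neighborhood of the closure of `Ω`, the flux of
`V = (½|∇u|² + F(u))·X - (∇u·X)∇u` through `∂Ω` vanishes:
`∫_{∂Ω} V · ν dS = 0`. -/
theorem stmt_6 (Ω : Set (Fin 3 → ℝ)) (hΩ : IsOpen Ω) (hΩb : Bornology.IsBounded Ω)
    (μ : Measure (Fin 3 → ℝ)) (ν : (Fin 3 → ℝ) → (Fin 3 → ℝ))
    (hμ : μ (frontier Ω)ᶜ = 0)
    -- the divergence theorem holds on `Ω` with surface measure `μ` and outward normal `ν`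
    (hdiv : ∀ W : (Fin 3 → ℝ) → (Fin 3 → ℝ),
      ContDiffOn ℝ 1 (fun x => (W x : Fin 3 → ℝ)) (closure Ω) →
      ∫ x, (∑ i : Fin 3, W x i * ν x i) ∂μ =
        ∫ x in Ω, (∑ i : Fin 3, fderiv ℝ (fun y => W y i) x (Pi.single i 1)))
    (O : Set (Fin 3 → ℝ)) (hO : IsOpen O) (hOΩ : closure Ω ⊆ O)
    (u : (Fin 3 → ℝ) → ℝ) (hu : ContDiffOn ℝ 2 u O)
    (heq : ∀ x ∈ O, (∑ i : Fin 3,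
        fderiv ℝ (fun y => fderiv ℝ u y (Pi.single i 1)) x (Pi.single i 1))
        + u x - (u x) ^ 3 = 0)
    (V : (Fin 3 → ℝ) → (Fin 3 → ℝ))
    (hV : ∀ x i, V x i =
      ((1 / 2) * (∑ j : Fin 3, (fderiv ℝ u x (Pi.single j 1)) ^ 2)
          + (1 / 4) * ((u x) ^ 2 - 1) ^ 2) * (if i = 2 then (1 : ℝ) else 0)
        - (fderiv ℝ u x (Pi.single 2 1)) * (fderiv ℝ u x (Pi.single i 1))) :
    ∫ x, (∑ i : Fin 3, V x i * ν x i) ∂μ = 0 := by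
  classical
  have hVfun : ∀ i : Fin 3, (fun y => V y i) = fun y =>
      ((1 / 2) * (∑ j : Fin 3, (fderiv ℝ u y (Pi.single j 1)) ^ 2)
          + (1 / 4) * ((u y) ^ 2 - 1) ^ 2) * (if i = 2 then (1 : ℝ) else 0)
        - (fderiv ℝ u y (Pi.single 2 1)) * (fderiv ℝ u y (Pi.single i 1)) :=
    fun i => funext fun y => hV y i
  have hu1 : ContDiffOn ℝ 1 u O := hu.of_le one_le_two
  have hder : ContDiffOn ℝ 1 (fun x => fderiv ℝ u x) O :=
    hu.fderiv_of_isOpen hO (by norm_num)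
  have hcomp : ∀ v, ContDiffOn ℝ 1 (fun x => fderiv ℝ u x v) O :=
    fun v => hder.clm_apply contDiffOn_const
  have hVC : ContDiffOn ℝ 1 (fun x => (V x : Fin 3 → ℝ)) (closure Ω) := by
    rw [contDiffOn_pi]
    intro i
    rw [hVfun i]
    refine ContDiffOn.mono ?_ hOΩ
    refine ContDiffOn.sub ?_ ((hcomp _).mul (hcomp _))
    exact ((contDiffOn_const.mul (ContDiffOn.sum fun j _ => (hcomp _).pow 2)).add
      (contDiffOn_const.mul (((hu1.pow 2).sub contDiffOn_const).pow 2))).mul contDiffOn_const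
  rw [hdiv V hVC]
  apply MeasureTheory.setIntegral_eq_zero_of_forall_eq_zero
  intro x hxΩ
  have hx : x ∈ O := hOΩ (subset_closure hxΩ)
  have hu2 : ContDiffAt ℝ 2 u x := hu.contDiffAt (hO.mem_nhds hx)
  have hdu : DifferentiableAt ℝ u x := hu2.differentiableAt (by norm_num)
  have hdf' : DifferentiableAt ℝ (fderiv ℝ u) x :=
    (hu2.fderiv_right (m := 1) (by norm_num)).differentiableAt (by norm_num)
  set B := fderiv ℝ (fderiv ℝ u) x with hBdef
  have hFi : ∀ v : Fin 3 → ℝ, HasFDerivAt (fun y => fderiv ℝ u y v)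
      ((ContinuousLinearMap.apply ℝ ℝ v).comp B) x := fun v => by
    simpa [Function.comp_def] using
      ((ContinuousLinearMap.apply ℝ ℝ v).hasFDerivAt).comp x hdf'.hasFDerivAt
  have hsymm : ∀ v w, B v w = B w v := hu2.isSymmSndFDerivAt (by simp)
  have hsq : ∀ v : Fin 3 → ℝ, HasFDerivAt (fun y => (fderiv ℝ u y v) ^ 2)
      (fderiv ℝ u x v • ((ContinuousLinearMap.apply ℝ ℝ v).comp B)
        + fderiv ℝ u x v • ((ContinuousLinearMap.apply ℝ ℝ v).comp B)) x := fun v => by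
    simpa only [← pow_two, Pi.pow_def] using (hFi v).mul (hFi v)
  have hS := HasFDerivAt.sum (fun j (_ : j ∈ Finset.univ) => hsq (Pi.single j 1))
  have hQ := (hdu.hasFDerivAt.mul hdu.hasFDerivAt).sub_const 1
  have hQ' : HasFDerivAt (fun y => (u y) ^ 2 - 1)
      (u x • fderiv ℝ u x + u x • fderiv ℝ u x) x := by
    simpa only [← pow_two, Pi.pow_apply] using hQ
  have hQ2 : HasFDerivAt (fun y => ((u y) ^ 2 - 1) ^ 2)
      ((u x ^ 2 - 1) • (u x • fderiv ℝ u x + u x • fderiv ℝ u x)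
        + (u x ^ 2 - 1) • (u x • fderiv ℝ u x + u x • fderiv ℝ u x)) x := by
    simpa only [← pow_two, Pi.pow_def] using hQ'.mul hQ'
  have k : ∀ i : Fin 3, fderiv ℝ (fun y => V y i) x (Pi.single i 1) =
      (if i = 2 then (1:ℝ) else 0) *
        (fderiv ℝ u x (Pi.single 0 1) * B (Pi.single i 1) (Pi.single 0 1)
          + fderiv ℝ u x (Pi.single 1 1) * B (Pi.single i 1) (Pi.single 1 1)
          + fderiv ℝ u x (Pi.single 2 1) * B (Pi.single i 1) (Pi.single 2 1)
          + (u x ^ 2 - 1) * (u x * fderiv ℝ u x (Pi.single i 1)))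
      - fderiv ℝ u x (Pi.single 2 1) * B (Pi.single i 1) (Pi.single i 1)
      - fderiv ℝ u x (Pi.single i 1) * B (Pi.single i 1) (Pi.single 2 1) := by
    intro i
    rw [hVfun i]
    have h := (((hS.const_mul ((1:ℝ)/2)).add (hQ2.const_mul ((1:ℝ)/4))).mul_const
        (if i = 2 then (1:ℝ) else 0)).sub
      ((hFi (Pi.single 2 1)).mul (hFi (Pi.single i 1)))
    simp only [Pi.add_def, Pi.mul_def, Pi.sub_def, Finset.sum_fn] at h
    rw [h.fderiv]
    simp only [ContinuousLinearMap.sub_apply, ContinuousLinearMap.add_apply,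
      ContinuousLinearMap.smul_apply, ContinuousLinearMap.coe_sum', Finset.sum_apply,
      ContinuousLinearMap.comp_apply, ContinuousLinearMap.apply_apply, smul_eq_mul,
      Fin.sum_univ_three]
    ring
  have hpde : B (Pi.single 0 1) (Pi.single 0 1) + B (Pi.single 1 1) (Pi.single 1 1)
      + B (Pi.single 2 1) (Pi.single 2 1) = u x ^ 3 - u x := by
    have h := heq x hx
    rw [Fin.sum_univ_three] at h
    rw [(hFi (Pi.single 0 1)).fderiv, (hFi (Pi.single 1 1)).fderiv,
      (hFi (Pi.single 2 1)).fderiv] at h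
    simp only [ContinuousLinearMap.comp_apply, ContinuousLinearMap.apply_apply] at h
    linarith
  rw [Fin.sum_univ_three, k 0, k 1, k 2,
    if_neg (by decide : ¬ (0:Fin 3) = 2), if_neg (by decide : ¬ (1:Fin 3) = 2),
    if_pos (rfl : (2:Fin 3) = 2)]
  linear_combination (fderiv ℝ u x (Pi.single 0 1)) * hsymm (Pi.single 2 1) (Pi.single 0 1)
    + (fderiv ℝ u x (Pi.single 1 1)) * hsymm (Pi.single 2 1) (Pi.single 1 1)
    - (fderiv ℝ u x (Pi.single 2 1)) * hpde
end

section
/- Let c₀ > 0, C₀ > 0, and let p : (r₀,∞) → ℝ be C² satisfying (r p'/√(1+p'²))' = I₁(r) + I₂(r) where I₁ ≥ 0 and |I₂(r)| ≤ C₀ r⁻². If at some t* ≥ max(2C₀/δ̄, r₀) one has t* p'(t*)/√(1+p'(t*)²) ≥ √2/2 + δ̄ for some δ̄ > 0, then for all t > t*, t p'(t)/√(1+p'(t)²) ≥ √2/2 + δ̄/2. -/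
open Real Set Filter Topology

/-- Flux monotonicity: let `p` be `C²` on `(r₀,∞)` with
`(r p'/√(1+p'²))' = I₁ + I₂` there, where `I₁ ≥ 0` and `|I₂(r)| ≤ C₀ r⁻²`.
If at some `t* ≥ max (2C₀/δ̄) r₀` one has
`t* p'(t*)/√(1+p'(t*)²) ≥ √2/2 + δ̄`, then for all `t > t*`,
`t p'(t)/√(1+p'(t)²) ≥ √2/2 + δ̄/2`. -/
theorem stmt_14 (r₀ C₀ δ : ℝ) (hr₀ : 0 < r₀) (hC₀ : 0 < C₀) (hδ : 0 < δ)
    (p I₁ I₂ : ℝ → ℝ)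
    (hp : ContDiffOn ℝ 2 p (Ioi r₀))
    (hI₁c : ContinuousOn I₁ (Ioi r₀)) (hI₂c : ContinuousOn I₂ (Ioi r₀))
    (hI₁ : ∀ r ∈ Ioi r₀, 0 ≤ I₁ r)
    (hI₂ : ∀ r ∈ Ioi r₀, |I₂ r| ≤ C₀ / r ^ 2)
    (hode : ∀ r ∈ Ioi r₀,
      HasDerivAt (fun s => s * deriv p s / Real.sqrt (1 + (deriv p s) ^ 2))
        (I₁ r + I₂ r) r)
    (t' : ℝ) (ht' : max (2 * C₀ / δ) r₀ ≤ t')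
    (hflux : Real.sqrt 2 / 2 + δ ≤ t' * deriv p t' / Real.sqrt (1 + (deriv p t') ^ 2)) :
    ∀ t : ℝ, t' < t →
      Real.sqrt 2 / 2 + δ / 2 ≤ t * deriv p t / Real.sqrt (1 + (deriv p t) ^ 2) := by
  have hs : ∀ d : ℝ, 0 < Real.sqrt (1 + d ^ 2) := fun d => Real.sqrt_pos.mpr (by positivity)
  set F : ℝ → ℝ := fun x => x * deriv p x / Real.sqrt (1 + (deriv p x) ^ 2) with hF
  set G : ℝ → ℝ := fun x => F x - C₀ / x with hGdef
  have ht'r : r₀ ≤ t' := le_trans (le_max_right _ _) ht'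
  have ht'pos : 0 < t' := lt_of_lt_of_le hr₀ ht'r
  have hdiffG : ∀ x ∈ Ioi r₀, HasDerivAt G (I₁ x + I₂ x + C₀ / x ^ 2) x := by
    intro x hx
    have hx0 : x ≠ 0 := ne_of_gt (lt_trans hr₀ hx)
    have h1 : HasDerivAt (fun y : ℝ => C₀ / y) (-(C₀ / x ^ 2)) x := by
      simpa [div_eq_mul_inv, mul_comm] using (hasDerivAt_inv hx0).const_mul C₀
    have h2 := (hode x hx).sub h1
    exact h2.congr_deriv (by ring)
  have hmono : MonotoneOn G (Ioi r₀) := by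
    apply monotoneOn_of_deriv_nonneg (convex_Ioi r₀)
    · exact fun x hx => (hdiffG x hx).continuousAt.continuousWithinAt
    · rw [interior_Ioi]
      exact fun x hx => ⟨_, (hdiffG x hx).hasDerivWithinAt⟩
    · rw [interior_Ioi]
      intro x hx
      rw [(hdiffG x hx).deriv]
      have h3 := hI₂ x hx
      have h4 := abs_le.mp h3
      have h5 := hI₁ x hx
      linarith [h4.1]
  have hC₀t' : C₀ / t' ≤ δ / 2 := by
    have h2 : 2 * C₀ / δ ≤ t' := le_trans (le_max_left _ _) ht'
    rw [div_le_iff₀ hδ] at h2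
    rw [div_le_iff₀ ht'pos]
    nlinarith
  intro t ht
  have htpos : 0 < t := lt_trans ht'pos ht
  have htIoi : t ∈ Ioi r₀ := lt_of_le_of_lt ht'r ht
  rcases lt_or_eq_of_le ht'r with hr | hr
  · -- easy case r₀ < t'
    have h := hmono (mem_Ioi.mpr hr) htIoi (le_of_lt ht)
    simp only [hGdef] at h
    have hCt : 0 < C₀ / t := div_pos hC₀ htpos
    have : F t' ≤ F t + C₀ / t' - C₀ / t := by linarith
    have hfl : Real.sqrt 2 / 2 + δ ≤ F t' := hflux
    linarith
  · -- hard case r₀ = t'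
    by_contra hcon
    push_neg at hcon
    have hconF : F t < Real.sqrt 2 / 2 + δ / 2 := hcon
    by_cases hdp : DifferentiableAt ℝ p t'
    · set L := deriv p t' with hLdef
      have hL : HasDerivAt p L t' := hdp.hasDerivAt
      set g : ℝ → ℝ := fun u => u / Real.sqrt (1 + u ^ 2) with hgdef
      have hgL : (Real.sqrt 2 / 2 + δ) / t' ≤ g L := by
        rw [div_le_iff₀ ht'pos]
        have : g L * t' = F t' := by
          simp only [hgdef, hF]
          field_simp
          ring
        rw [this]
        exact hflux
      set ε : ℝ := C₀ / (2 * t * t') with hεdef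
      have hε : 0 < ε := by positivity
      set c : ℝ := Real.sqrt 2 / 2 + δ / 2 - C₀ / t with hcdef
      set φ : ℝ → ℝ := fun x => (c + C₀ / x) / x with hφdef
      have hφt' : φ t' < g L - ε := by
        have h1 : c + C₀ / t' ≤ Real.sqrt 2 / 2 + δ - C₀ / t := by
          simp only [hcdef]; linarith
        have h2 : φ t' ≤ ((Real.sqrt 2 / 2 + δ) - C₀ / t) / t' := by
          simp only [hφdef]
          gcongr
        have h3 : ((Real.sqrt 2 / 2 + δ) - C₀ / t) / t'
            = (Real.sqrt 2 / 2 + δ) / t' - C₀ / (t * t') := by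
          rw [sub_div, div_div]
        have h4 : ε < C₀ / (t * t') := by
          rw [hεdef]
          apply div_lt_div_of_pos_left hC₀ (by positivity)
          nlinarith
        linarith [h2.trans_eq h3]
      have hφcont : ContinuousAt φ t' := by
        have h1 : ContinuousAt (fun x : ℝ => c + C₀ / x) t' :=
          continuousAt_const.add (continuousAt_const.div continuousAt_id (ne_of_gt ht'pos))
        exact h1.div continuousAt_id (ne_of_gt ht'pos)
      have hev : ∀ᶠ x in 𝓝[>] t', φ x < g L - ε :=
        (hφcont.tendsto.eventually_lt_const hφt').filter_mono nhdsWithin_le_nhds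
      have hset : {x | φ x < g L - ε} ∈ 𝓝[>] t' := hev
      obtain ⟨u, hu, hsub⟩ := mem_nhdsGT_iff_exists_Ioo_subset.mp hset
      set x₀ : ℝ := min u t with hx₀def
      have hx₀ : t' < x₀ := lt_min hu ht
      have hkey : ∀ x₁ ∈ Ioo t' x₀, g ((p x₁ - p t') / (x₁ - t')) ≤ g L - ε := by
        intro x₁ hx₁
        have hx₁t : x₁ < t := lt_of_lt_of_le hx₁.2 (min_le_right _ _)
        have hx₁u : x₁ < u := lt_of_lt_of_le hx₁.2 (min_le_left _ _)
        have hcont : ContinuousOn p (Icc t' x₁) := by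
          intro y hy
          rcases eq_or_lt_of_le hy.1 with hy1 | hy1
          · rw [← hy1]; exact hL.continuousAt.continuousWithinAt
          · have hyIoi : y ∈ Ioi r₀ := by rw [hr]; exact hy1
            exact (((hp.differentiableOn (by norm_num)).continuousOn).continuousAt
              (isOpen_Ioi.mem_nhds hyIoi)).continuousWithinAt
        have hderiv : ∀ x ∈ Ioo t' x₁, HasDerivAt p (deriv p x) x := by
          intro x hx
          have hxIoi : x ∈ Ioi r₀ := by rw [hr]; exact hx.1
          exact (((hp.differentiableOn (by norm_num)) x hxIoi).differentiableAt
            (isOpen_Ioi.mem_nhds hxIoi)).hasDerivAt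
        obtain ⟨ξ, hξ, hξeq⟩ := exists_hasDerivAt_eq_slope p (deriv p) hx₁.1 hcont hderiv
        rw [← hξeq]
        have hξIoi : ξ ∈ Ioi r₀ := by rw [hr]; exact hξ.1
        have hξpos : 0 < ξ := lt_trans hr₀ hξIoi
        have hξt : ξ < t := lt_trans hξ.2 hx₁t
        have hGle := hmono hξIoi htIoi (le_of_lt hξt)
        simp only [hGdef] at hGle
        have hFξ : F ξ < c + C₀ / ξ := by
          simp only [hcdef]
          linarith
        have hgξ : g (deriv p ξ) = F ξ / ξ := by
          simp only [hgdef, hF]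
          rw [mul_div_assoc, mul_div_cancel_left₀ _ (ne_of_gt hξpos)]
        have hφξ : φ ξ < g L - ε := hsub ⟨hξ.1, lt_trans hξ.2 hx₁u⟩
        simp only [hφdef] at hφξ
        calc g (deriv p ξ) = F ξ / ξ := hgξ
          _ ≤ (c + C₀ / ξ) / ξ := by gcongr
          _ ≤ g L - ε := hφξ.le
      have hslope : Tendsto (fun x₁ => g ((p x₁ - p t') / (x₁ - t'))) (𝓝[>] t') (𝓝 (g L)) := by
        have h1 : Tendsto (slope p t') (𝓝[≠] t') (𝓝 L) := hasDerivAt_iff_tendsto_slope.mp hL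
        have hgc : Continuous g := by
          apply continuous_id.div
          · exact Real.continuous_sqrt.comp (continuous_const.add (continuous_pow 2))
          · exact fun u => ne_of_gt (hs u)
        have h3 : Tendsto (g ∘ slope p t') (𝓝[≠] t') (𝓝 (g L)) :=
          (hgc.continuousAt.tendsto).comp h1
        have h4 : Tendsto (g ∘ slope p t') (𝓝[>] t') (𝓝 (g L)) :=
          h3.mono_left (nhdsWithin_mono _ (fun x hx => ne_of_gt hx))
        apply h4.congr
        intro x
        simp [Function.comp, slope_def_field]
      have hfin : g L ≤ g L - ε :=
        le_of_tendsto hslope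
          (Filter.eventually_of_mem (Ioo_mem_nhdsGT_of_mem ⟨le_refl t', hx₀⟩) hkey)
      linarith
    · rw [deriv_zero_of_not_differentiableAt hdp] at hflux
      simp at hflux
      have : (0:ℝ) ≤ Real.sqrt 2 := Real.sqrt_nonneg 2
      linarith
end
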